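/- Let N be a nilpotent endomorphism of a finite-dimensional vector space V over a field of characteristic zero. Then there exists at most one finite increasing filtration W of V such that N(W_k) ⊆ W_{k-2} for all k and such that N^k: gr^W_k V → gr^W_{-k} V is an isomorphism for all k ≥ 0. -/
import Mathlib


/-- `W` is a monodromy weight filtration (centered at 0) for `N`: a finite increasing
filtration with `N (W k) ⊆ W (k-2)` such that `N^k` induces an isomorphism
`gr^W_k V ≅ gr^W_{-k} V` for all `k ≥ 0` (encoded by surjectivity and injectivity
conditions on submodules). -/
def IsMonodromyWeightFiltration {K V : Type*} [Field K] [AddCommGroup V] [Module K V]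
    (N : Module.End K V) (W : ℤ → Submodule K V) : Prop :=
  Monotone W ∧ (∃ a, W a = ⊥) ∧ (∃ b, W b = ⊤) ∧
  (∀ k : ℤ, Submodule.map N (W k) ≤ W (k - 2)) ∧
  (∀ k : ℕ,
    W (-(k : ℤ)) ≤ Submodule.map (N ^ k : Module.End K V) (W (k : ℤ)) ⊔ W (-(k : ℤ) - 1) ∧
    W (k : ℤ) ⊓ Submodule.comap (N ^ k : Module.End K V) (W (-(k : ℤ) - 1)) ≤ W ((k : ℤ) - 1))

section Aux
variable {K V : Type*} [Field K] [AddCommGroup V] [Module K V]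
  (N : Module.End K V) (W : ℤ → Submodule K V)

lemma aux_shift (hshift : ∀ k : ℤ, Submodule.map N (W k) ≤ W (k - 2)) :
    ∀ n : ℕ, ∀ j : ℤ, Submodule.map (N ^ n : Module.End K V) (W j) ≤ W (j - 2 * n) := by
  intro n
  induction n with
  | zero => intro j; rw [pow_zero]; rw [Module.End.one_eq_id, Submodule.map_id]; simp
  | succ n ih =>
    intro j
    rw [pow_succ, Module.End.mul_eq_comp, Submodule.map_comp]
    calc Submodule.map (N ^ n : Module.End K V) (Submodule.map N (W j))
        ≤ Submodule.map (N ^ n : Module.End K V) (W (j - 2)) :=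
          Submodule.map_mono (hshift j)
      _ ≤ W (j - 2 - 2 * n) := ih (j - 2)
      _ = W (j - 2 * (n + 1)) := by ring_nf

lemma aux_pow_zero {m : ℕ} (hm : N ^ m = 0) {k : ℕ} (hk : m ≤ k) : N ^ k = 0 := by
  obtain ⟨d, rfl⟩ := Nat.exists_eq_add_of_le hk
  rw [pow_add, hm, zero_mul]

lemma aux_top (hmono : Monotone W) {b : ℤ} (hb : W b = ⊤)
    (hgr : ∀ k : ℕ,
      W (-(k : ℤ)) ≤ Submodule.map (N ^ k : Module.End K V) (W (k : ℤ)) ⊔ W (-(k : ℤ) - 1) ∧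
      W (k : ℤ) ⊓ Submodule.comap (N ^ k : Module.End K V) (W (-(k : ℤ) - 1)) ≤ W ((k : ℤ) - 1))
    {m : ℕ} (hm : N ^ m = 0) : ∀ j : ℤ, (m : ℤ) ≤ j → W j = ⊤ := by
  -- step: for natural k ≥ m, W k = W (k-1)
  have step : ∀ k : ℕ, m ≤ k → W (k : ℤ) ≤ W ((k : ℤ) - 1) := by
    intro k hk
    have h2 := (hgr k).2
    rw [aux_pow_zero N hm hk, Submodule.comap_zero, inf_top_eq] at h2
    exact h2
  have const : ∀ n : ℕ, W ((m : ℤ) + n) = W (m : ℤ) := by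
    intro n
    induction n with
    | zero => simp
    | succ n ih =>
      have h := step (m + n + 1) (by omega)
      push_cast at h
      have : W ((m : ℤ) + (n + 1)) ≤ W ((m : ℤ) + n) := by
        calc W ((m : ℤ) + (n + 1)) ≤ W ((m : ℤ) + n + 1 - 1) := by
              refine le_trans (le_of_eq ?_) h; ring_nf
          _ = W ((m : ℤ) + n) := by ring_nf
      refine le_antisymm (le_trans this ih.le) ?_
      rw [← ih]; exact hmono (by omega)
  have hm_top : W (m : ℤ) = ⊤ := by
    rcases le_or_gt b (m : ℤ) with h | h
    · exact top_le_iff.mp (hb ▸ hmono h)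
    · have : W ((m : ℤ) + ((b - m).toNat : ℤ)) = W (m : ℤ) := const _
      rw [Int.toNat_of_nonneg (by omega)] at this
      have : W b = W (m : ℤ) := by rw [← this]; congr 1; ring
      rw [← this, hb]
  intro j hj
  have : W ((m : ℤ) + ((j - m).toNat : ℤ)) = W (m : ℤ) := const _
  rw [Int.toNat_of_nonneg (by omega)] at this
  have : W j = W (m : ℤ) := by rw [← this]; congr 1; ring
  rw [this, hm_top]

lemma aux_bot (hmono : Monotone W) {a : ℤ} (ha : W a = ⊥)
    (hgr : ∀ k : ℕ,
      W (-(k : ℤ)) ≤ Submodule.map (N ^ k : Module.End K V) (W (k : ℤ)) ⊔ W (-(k : ℤ) - 1) ∧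
      W (k : ℤ) ⊓ Submodule.comap (N ^ k : Module.End K V) (W (-(k : ℤ) - 1)) ≤ W ((k : ℤ) - 1))
    {m : ℕ} (hm : N ^ m = 0) : ∀ j : ℤ, j ≤ -(m : ℤ) → W j = ⊥ := by
  have step : ∀ k : ℕ, m ≤ k → W (-(k : ℤ)) ≤ W (-(k : ℤ) - 1) := by
    intro k hk
    have h1 := (hgr k).1
    rw [aux_pow_zero N hm hk, Submodule.map_zero, bot_sup_eq] at h1
    exact h1
  have const : ∀ n : ℕ, W (-(m : ℤ) - n) = W (-(m : ℤ)) := by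
    intro n
    induction n with
    | zero => simp
    | succ n ih =>
      have h := step (m + n) (by omega)
      push_cast at h
      have h1 : W (-(m : ℤ) - ((n + 1 : ℕ) : ℤ)) = W (-((m : ℤ) + n) - 1) := by
        push_cast; ring_nf
      have h2 : W (-((m : ℤ) + n)) = W (-(m : ℤ) - n) := by ring_nf
      refine le_antisymm (hmono (by push_cast; omega)) ?_
      rw [h1, ← ih, ← h2]
      exact h
  have hm_bot : W (-(m : ℤ)) = ⊥ := by
    rcases le_or_gt (-(m : ℤ)) a with h | h
    · exact le_bot_iff.mp (ha ▸ hmono h)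
    · have hc : W (-(m : ℤ) - ((-(m : ℤ) - a).toNat : ℤ)) = W (-(m : ℤ)) := const _
      rw [Int.toNat_of_nonneg (by omega)] at hc
      have : W a = W (-(m : ℤ)) := by rw [← hc]; congr 1; ring
      rw [← this, ha]
  intro j hj
  have hc : W (-(m : ℤ) - ((-(m : ℤ) - j).toNat : ℤ)) = W (-(m : ℤ)) := const _
  rw [Int.toNat_of_nonneg (by omega)] at hc
  have : W j = W (-(m : ℤ)) := by rw [← hc]; congr 1; ring
  rw [this, hm_bot]

end Aux

theorem stmt10_aux {K V : Type*} [Field K] [AddCommGroup V] [Module K V]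
    (N : Module.End K V) (hnil : IsNilpotent N)
    (W W' : ℤ → Submodule K V)
    (hW : (Monotone W ∧ (∃ a, W a = ⊥) ∧ (∃ b, W b = ⊤) ∧
      (∀ k : ℤ, Submodule.map N (W k) ≤ W (k - 2)) ∧
      (∀ k : ℕ,
        W (-(k : ℤ)) ≤ Submodule.map (N ^ k : Module.End K V) (W (k : ℤ)) ⊔ W (-(k : ℤ) - 1) ∧
        W (k : ℤ) ⊓ Submodule.comap (N ^ k : Module.End K V) (W (-(k : ℤ) - 1)) ≤ W ((k : ℤ) - 1))))
    (hW' : (Monotone W' ∧ (∃ a, W' a = ⊥) ∧ (∃ b, W' b = ⊤) ∧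
      (∀ k : ℤ, Submodule.map N (W' k) ≤ W' (k - 2)) ∧
      (∀ k : ℕ,
        W' (-(k : ℤ)) ≤ Submodule.map (N ^ k : Module.End K V) (W' (k : ℤ)) ⊔ W' (-(k : ℤ) - 1) ∧
        W' (k : ℤ) ⊓ Submodule.comap (N ^ k : Module.End K V) (W' (-(k : ℤ) - 1)) ≤ W' ((k : ℤ) - 1)))) :
    W = W' := by
  obtain ⟨hmono, ⟨a, ha⟩, ⟨b, hb⟩, hshift, hgr⟩ := hW
  obtain ⟨hmono', ⟨a', ha'⟩, ⟨b', hb'⟩, hshift', hgr'⟩ := hW'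
  obtain ⟨m, hm⟩ := hnil
  have htop := aux_top N W hmono hb hgr hm
  have hbot := aux_bot N W hmono ha hgr hm
  have htop' := aux_top N W' hmono' hb' hgr' hm
  have hbot' := aux_bot N W' hmono' ha' hgr' hm
  -- recursive characterization of W k and W (-k-1) in terms of W (k+1) and W (-k-2)
  have charK : ∀ (U : ℤ → Submodule K V), Monotone U →
      (∀ k : ℤ, Submodule.map N (U k) ≤ U (k - 2)) →
      (∀ k : ℕ,
        U (-(k : ℤ)) ≤ Submodule.map (N ^ k : Module.End K V) (U (k : ℤ)) ⊔ U (-(k : ℤ) - 1) ∧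
        U (k : ℤ) ⊓ Submodule.comap (N ^ k : Module.End K V) (U (-(k : ℤ) - 1)) ≤ U ((k : ℤ) - 1)) →
      ∀ k : ℕ,
        U (k : ℤ) = U ((k : ℤ) + 1) ⊓
          Submodule.comap (N ^ (k + 1) : Module.End K V) (U (-(k : ℤ) - 2)) ∧
        U (-(k : ℤ) - 1) = Submodule.map (N ^ (k + 1) : Module.End K V) (U ((k : ℤ) + 1))
          ⊔ U (-(k : ℤ) - 2) := by
    intro U hUm hUs hUgr k
    have e1 : ((k + 1 : ℕ) : ℤ) = (k : ℤ) + 1 := by push_cast; ring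
    have e2 : (-(((k:ℕ) + 1 : ℕ) : ℤ) - 1) = -(k : ℤ) - 2 := by push_cast; ring
    have e3 : (((k:ℕ) + 1 : ℕ) : ℤ) - 1 = (k : ℤ) := by push_cast; ring
    constructor
    · apply le_antisymm
      · refine le_inf (hUm (by omega)) ?_
        intro x hx
        have : (N ^ (k+1) : Module.End K V) x ∈ U ((k : ℤ) - 2 * ((k:ℕ)+1 : ℕ)) :=
          aux_shift N U hUs (k + 1) (k : ℤ) ⟨x, hx, rfl⟩
        exact hUm (show (k : ℤ) - 2 * ((k:ℕ)+1 : ℕ) ≤ -(k : ℤ) - 2 by push_cast; omega) this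
      · have h := (hUgr (k + 1)).2
        rw [e1] at h
        have e2' : -((k : ℤ) + 1) - 1 = -(k : ℤ) - 2 := by ring
        have e3' : (k : ℤ) + 1 - 1 = (k : ℤ) := by ring
        rw [e2', e3'] at h
        exact h
    · apply le_antisymm
      · have h := (hUgr (k + 1)).1
        rw [e1] at h
        have e4' : -((k : ℤ) + 1) = -(k : ℤ) - 1 := by ring
        have e2' : -((k : ℤ) + 1) - 1 = -(k : ℤ) - 2 := by ring
        rw [e2', e4'] at h
        exact h
      · refine sup_le ?_ (hUm (by omega))
        refine le_trans (aux_shift N U hUs (k + 1) ((k : ℤ) + 1)) (hUm ?_)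
        push_cast; omega
  have chW := charK W hmono hshift hgr
  have chW' := charK W' hmono' hshift' hgr'
  -- downward induction
  have step : ∀ k : ℕ,
      ((∀ j : ℤ, ((k : ℤ) + 1) ≤ j → W j = W' j) ∧
        (∀ j : ℤ, j ≤ -(k : ℤ) - 2 → W j = W' j)) →
      ((∀ j : ℤ, (k : ℤ) ≤ j → W j = W' j) ∧
        (∀ j : ℤ, j ≤ -(k : ℤ) - 1 → W j = W' j)) := by
    intro k ⟨h1, h2⟩
    have hk1 : W ((k : ℤ) + 1) = W' ((k : ℤ) + 1) := h1 _ (by omega)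
    have hk2 : W (-(k : ℤ) - 2) = W' (-(k : ℤ) - 2) := h2 _ (by omega)
    have hWk : W (k : ℤ) = W' (k : ℤ) := by
      rw [(chW k).1, (chW' k).1, hk1, hk2]
    have hWmk : W (-(k : ℤ) - 1) = W' (-(k : ℤ) - 1) := by
      rw [(chW k).2, (chW' k).2, hk1, hk2]
    constructor
    · intro j hj
      rcases eq_or_lt_of_le hj with h | h
      · rw [← h]; exact hWk
      · exact h1 j (by omega)
    · intro j hj
      rcases eq_or_lt_of_le hj with h | h
      · rw [h]; exact hWmk
      · exact h2 j (by omega)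
  have base : (∀ j : ℤ, ((m : ℤ)) ≤ j → W j = W' j) ∧
      (∀ j : ℤ, j ≤ -(m : ℤ) - 1 → W j = W' j) := by
    constructor
    · intro j hj; rw [htop j hj, htop' j hj]
    · intro j hj; rw [hbot j (by omega), hbot' j (by omega)]
  have down : ∀ i : ℕ, (∀ j : ℤ, ((m - i : ℕ) : ℤ) ≤ j → W j = W' j) ∧
      (∀ j : ℤ, j ≤ -((m - i : ℕ) : ℤ) - 1 → W j = W' j) := by
    intro i
    induction i with
    | zero => simpa using base
    | succ i ih =>
      rcases le_or_gt m i with h | h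
      · have e : m - (i + 1) = m - i := by omega
        rw [e]; exact ih
      · exact step (m - (i+1))
          ⟨fun j hj => ih.1 j (by omega), fun j hj => ih.2 j (by omega)⟩
  have final := down m
  simp only [Nat.sub_self, Nat.cast_zero] at final
  funext j
  rcases le_or_gt 0 j with h | h
  · exact final.1 j h
  · exact final.2 j (by omega)


/-- Uniqueness of the monodromy weight filtration: a nilpotent endomorphism `N` of a
finite-dimensional vector space over a field of characteristic zero admits at most one
finite increasing filtration `W` with `N (W k) ⊆ W (k-2)` for all `k` and with `N^k`
inducing isomorphisms `gr^W_k V ≅ gr^W_{-k} V` for all `k ≥ 0`. -/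
theorem stmt10 {K V : Type*} [Field K] [CharZero K] [AddCommGroup V] [Module K V]
    [FiniteDimensional K V] (N : Module.End K V) (hnil : IsNilpotent N)
    (W W' : ℤ → Submodule K V)
    (hW : IsMonodromyWeightFiltration N W) (hW' : IsMonodromyWeightFiltration N W') :
    W = W' :=
  stmt10_aux N hnil W W' hW hW'
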